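/- A finite sum over RBs n and BSs j of functions p_n ↦ log₂(1 + γ_j(n)/(1 + p_n·F_j(n))) is a convex function of the power vector (p_1,…,p_N) on the nonnegative orthant. -/

import Mathlib

open Real Set

lemma convexOn_of_eq {E : Type*} [AddCommMonoid E] [Module ℝ E] {s : Set E}
    {f g : E → ℝ} (h : ConvexOn ℝ s f) (heq : ∀ x ∈ s, f x = g x) :
    ConvexOn ℝ s g := by
  refine ⟨h.1, fun x hx y hy a b ha hb hab => ?_⟩
  rw [← heq _ hx, ← heq _ hy, ← heq _ (h.1 hx hy ha hb hab)]
  exact h.2 hx hy ha hb hab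

lemma aux_convex (γ : ℝ) (hγ : 0 ≤ γ) :
    ConvexOn ℝ (Ioi (0:ℝ)) (fun s => Real.log (s + γ) - Real.log s) := by
  set f : ℝ → ℝ := fun s => Real.log (s + γ) - Real.log s with hf
  set g : ℝ → ℝ := fun s => (s + γ)⁻¹ - s⁻¹ with hg
  have hderiv : ∀ s ∈ Ioi (0:ℝ), HasDerivAt f (g s) s := by
    intro s hs
    have hs0 : s ≠ 0 := ne_of_gt hs
    have hsγ : s + γ ≠ 0 := ne_of_gt (by linarith [hs.out])
    have h1 : HasDerivAt (fun s : ℝ => Real.log (s + γ)) ((s + γ)⁻¹) s := by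
      have := (Real.hasDerivAt_log hsγ).comp s ((hasDerivAt_id s).add_const γ)
      simpa [Function.comp_def] using this
    exact h1.sub (Real.hasDerivAt_log hs0)
  have hderiv2 : ∀ s ∈ Ioi (0:ℝ), HasDerivAt g (-((s + γ)^2)⁻¹ + (s^2)⁻¹) s := by
    intro s hs
    have hs0 : s ≠ 0 := ne_of_gt hs
    have hsγ : s + γ ≠ 0 := ne_of_gt (by linarith [hs.out])
    have h1 : HasDerivAt (fun s : ℝ => (s + γ)⁻¹) (-((s + γ)^2)⁻¹) s := by
      have := (hasDerivAt_inv hsγ).comp s ((hasDerivAt_id s).add_const γ)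
      simpa [Function.comp_def] using this
    have := h1.sub (hasDerivAt_inv hs0)
    rw [show -((s + γ)^2)⁻¹ + (s^2)⁻¹ = -((s + γ)^2)⁻¹ - -(s^2)⁻¹ by ring]
    exact this
  have hdf : ∀ s ∈ Ioi (0:ℝ), deriv f s = g s := fun s hs => (hderiv s hs).deriv
  refine convexOn_of_deriv2_nonneg (convex_Ioi 0) ?_ ?_ ?_ ?_
  · exact fun s hs => ((hderiv s hs).continuousAt).continuousWithinAt
  · rw [interior_Ioi]
    exact fun s hs => ((hderiv s hs).differentiableAt).differentiableWithinAt
  · rw [interior_Ioi]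
    intro s hs
    have hev : deriv f =ᶠ[nhds s] g :=
      Filter.eventuallyEq_of_mem (isOpen_Ioi.mem_nhds hs) hdf
    exact (((hderiv2 s hs).congr_of_eventuallyEq hev).differentiableAt).differentiableWithinAt
  · rw [interior_Ioi]
    intro s hs
    have hev : deriv f =ᶠ[nhds s] g :=
      Filter.eventuallyEq_of_mem (isOpen_Ioi.mem_nhds hs) hdf
    have : deriv (deriv f) s = -((s + γ)^2)⁻¹ + (s^2)⁻¹ := by
      rw [hev.deriv_eq]
      exact (hderiv2 s hs).deriv
    simp only [Function.iterate_succ, Function.iterate_zero, Function.comp_apply, id]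
    rw [this]
    have h1 : (0:ℝ) < s := hs
    have : ((s + γ)^2)⁻¹ ≤ (s^2)⁻¹ := by
      apply inv_anti₀ (by positivity)
      nlinarith
    linarith

lemma key (γ F : ℝ) (hγ : 0 ≤ γ) (hF : 0 < F) :
    ConvexOn ℝ (Ici (0:ℝ)) (fun t => Real.logb 2 (1 + γ / (1 + t * F))) := by
  have h := aux_convex γ hγ
  have hc : (0:ℝ) ≤ (Real.log 2)⁻¹ := by positivity
  -- convexity of t ↦ h(1 + t F) on Ici 0
  have h2 : ConvexOn ℝ (Ici (0:ℝ))
      (fun t => Real.log (1 + t * F + γ) - Real.log (1 + t * F)) := by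
    refine ⟨convex_Ici 0, fun x hx y hy a b ha hb hab => ?_⟩
    have hx1 : (1:ℝ) + x * F ∈ Ioi (0:ℝ) := by
      have := hx.out; have := hF; simp only [mem_Ioi]; nlinarith
    have hy1 : (1:ℝ) + y * F ∈ Ioi (0:ℝ) := by
      have := hy.out; have := hF; simp only [mem_Ioi]; nlinarith
    have := h.2 hx1 hy1 ha hb hab
    have heq : a • (1 + x * F) + b • (1 + y * F) = 1 + (a • x + b • y) * F := by
      simp only [smul_eq_mul]; ring_nf; linarith [hab]
    rw [heq] at this
    simpa [smul_eq_mul] using this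
  have h3 := h2.smul hc
  refine convexOn_of_eq h3 ?_
  intro t ht
  have h1 : (0:ℝ) < 1 + t * F := by have := ht.out; nlinarith
  have hγ1 : (0:ℝ) < 1 + t * F + γ := by linarith
  simp only [smul_eq_mul, Real.logb, div_eq_inv_mul]
  congr 1
  rw [← Real.log_div (ne_of_gt hγ1) (ne_of_gt h1)]
  congr 1
  field_simp

lemma convexOn_finset_sum {E : Type*} [AddCommMonoid E] [SMul ℝ E] [Module ℝ E]
    {s : Set E} {κ : Type*} (hs : Convex ℝ s) (t : Finset κ) (f : κ → E → ℝ)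
    (h : ∀ i ∈ t, ConvexOn ℝ s (f i)) :
    ConvexOn ℝ s (fun x => ∑ i ∈ t, f i x) := by
  induction t using Finset.cons_induction with
  | empty => simpa using convexOn_const (0:ℝ) hs
  | cons a t ha ih =>
    simp only [Finset.sum_cons]
    exact (h a (Finset.mem_cons_self a t)).add
      (ih fun i hi => h i (Finset.mem_cons_of_mem hi))

/-- The total interfered ground-UE sum-rate is convex in the power vector on the
nonnegative orthant. -/
theorem sum_interfered_rate_convexOn {ι : Type*} (N : ℕ) (Ω : Fin N → Finset ι)
    (γ F : Fin N → ι → ℝ)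
    (hγ : ∀ n, ∀ j ∈ Ω n, 0 ≤ γ n j) (hF : ∀ n, ∀ j ∈ Ω n, 0 < F n j) :
    ConvexOn ℝ {p : Fin N → ℝ | ∀ n, 0 ≤ p n}
      (fun p => ∑ n : Fin N, ∑ j ∈ Ω n,
        Real.logb 2 (1 + γ n j / (1 + p n * F n j))) := by
  have hconv : Convex ℝ {p : Fin N → ℝ | ∀ n, 0 ≤ p n} := by
    have : {p : Fin N → ℝ | ∀ n, 0 ≤ p n} = Set.pi Set.univ (fun _ => Ici (0:ℝ)) := by
      ext p; simp [Set.mem_pi, Pi.le_def]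
    rw [this]
    exact convex_pi (fun i _ => convex_Ici 0)
  apply convexOn_finset_sum hconv
  intro n _
  apply convexOn_finset_sum hconv
  intro j hj
  have hk := key (γ n j) (F n j) (hγ n j hj) (hF n j hj)
  refine ⟨hconv, fun x hx y hy a b ha hb hab => ?_⟩
  have := hk.2 (hx n) (hy n) ha hb hab
  simpa using this
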